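/- arXiv:1711.02362 — 2 statements merged into one kernel-verified Lean document; each statement's English description precedes it below -/
import Mathlib

section
/- The function ψ(λ) = −2 ∫_1^λ √((s−1)/s) ds, defined for λ ∈ ℂ \ (−∞,1], satisfies the closed-form identity ψ(λ) = −2√(λ(λ−1)) + ln(−1 + 2λ + 2√(λ(λ−1))). -/
open Complex

/-- The branch of `√(λ(λ - 1))` with cut `[0, 1]` that behaves like `λ` as `λ → +∞`. -/
noncomputable def sqrtBranch1 (l : ℂ) : ℂ :=
  l * (1 - 1 / l) ^ ((1 : ℂ) / 2)

/-- The closed-form expression `ψ(λ) = -2√(λ(λ-1)) + ln(-1 + 2λ + 2√(λ(λ-1)))`. -/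
noncomputable def psiFun (l : ℂ) : ℂ :=
  -2 * sqrtBranch1 l + Complex.log (-1 + 2 * l + 2 * sqrtBranch1 l)

lemma part2 (l : ℂ) (hl : l.im ≠ 0 ∨ 1 < l.re) :
    HasDerivAt psiFun (-2 * (1 - 1 / l) ^ ((1 : ℂ) / 2)) l := by
  have hl0 : l ≠ 0 := by
    rcases hl with h | h
    · exact fun h0 => h (by simp [h0])
    · exact fun h0 => by simp [h0] at h; linarith
  have hl1 : l ≠ 1 := by
    rcases hl with h | h
    · exact fun h0 => h (by simp [h0])
    · exact fun h0 => by simp [h0] at h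
  set z : ℂ := 1 - 1 / l with hz
  have hzne : z ≠ 0 := by
    intro h
    apply hl1
    have : (1 : ℂ) = 1 / l := by linear_combination h
    field_simp at this
    exact this
  have hnsq : Complex.normSq l ≠ 0 := by
    simpa [Complex.normSq_eq_zero] using hl0
  have hzim : z.im = l.im / Complex.normSq l := by
    simp [hz, Complex.sub_im, Complex.div_im, Complex.one_im, Complex.one_re]
    ring
  have hzslit : z ∈ slitPlane := by
    rw [Complex.mem_slitPlane_iff]
    rcases hl with h | h
    · right
      rw [hzim]
      exact div_ne_zero h hnsq
    · left
      have hzre : z.re = 1 - l.re / Complex.normSq l := by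
        simp [hz, Complex.sub_re, Complex.div_re, Complex.one_im, Complex.one_re]
      rw [hzre]
      have h1 : l.re < Complex.normSq l := by
        have : l.re ^ 2 ≤ Complex.normSq l := by
          rw [Complex.normSq_apply]; nlinarith [sq_nonneg l.im]
        nlinarith
      have h2 : (0:ℝ) < Complex.normSq l := lt_of_le_of_ne (Complex.normSq_nonneg l) (Ne.symm hnsq)
      rw [sub_pos, div_lt_one h2]
      exact h1
  have hdz : HasDerivAt (fun y : ℂ => 1 - 1 / y) ((l ^ 2)⁻¹) l := by
    simpa using (hasDerivAt_inv hl0).const_sub 1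
  set w : ℂ := z ^ ((1:ℂ)/2) with hw
  have hwsq : w * w = z := by
    rw [hw, ← Complex.cpow_add _ _ hzne]
    norm_num
  have hwne : w ≠ 0 := fun h => hzne (by rw [← hwsq, h, mul_zero])
  have hzhalf : z ^ ((1:ℂ)/2 - 1) = w / z := by
    rw [show (1:ℂ)/2 - 1 = 1/2 + (-1) by ring, Complex.cpow_add _ _ hzne,
      Complex.cpow_neg, Complex.cpow_one, ← hw, div_eq_mul_inv]
  have hdw : HasDerivAt (fun y : ℂ => (1 - 1 / y) ^ ((1:ℂ)/2))
      ((1/2) * (w / z) * (l ^ 2)⁻¹) l := by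
    have h := hdz.cpow_const (c := (1:ℂ)/2) hzslit
    rw [← hz, hzhalf] at h
    exact h
  set S' : ℂ := w + l * ((1/2) * (w / z) * (l ^ 2)⁻¹) with hS'
  have hdS : HasDerivAt sqrtBranch1 S' l := by
    have h := (hasDerivAt_id l).mul hdw
    have h2 : HasDerivAt (fun y : ℂ => y * (1 - 1/y) ^ ((1:ℂ)/2)) S' l := by
      refine h.congr_deriv ?_
      rw [hS', ← hz, ← hw]
      simp only [id_eq]
      ring
    exact h2
  set u : ℂ := -1 + 2 * l + 2 * sqrtBranch1 l with hu
  have hSval : sqrtBranch1 l = l * w := by rw [sqrtBranch1, ← hz, ← hw]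
  have hSsq : (l * w) * (l * w) = l ^ 2 - l := by
    have h : (l * w) * (l * w) = l ^ 2 * (w * w) := by ring
    rw [h, hwsq, hz]
    field_simp
  have hinv : u * (-1 + 2 * l - 2 * (l * w)) = 1 := by
    rw [hu, hSval]
    linear_combination (-4 : ℂ) * hSsq
  have hune : u ≠ 0 := by
    intro h0
    rw [h0, zero_mul] at hinv
    exact one_ne_zero hinv.symm
  have huslit : u ∈ slitPlane := by
    rw [Complex.mem_slitPlane_iff]
    by_cases him : u.im = 0
    · left
      have hv : u⁻¹ = -1 + 2 * l - 2 * (l * w) := inv_eq_of_mul_eq_one_right hinv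
      have hlval : l = (u + u⁻¹ + 2) / 4 := by
        rw [hv, hu, hSval]
        ring
      have huinvim : (u⁻¹).im = 0 := by
        rw [Complex.inv_im, him]
        simp
      have hlim : l.im = 0 := by
        rw [hlval]
        simp [Complex.div_im, Complex.add_im, him, huinvim]
      have hre : 1 < l.re := by
        rcases hl with h | h
        · exact absurd hlim h
        · exact h
      have hsum : u.re + (u⁻¹).re = 4 * l.re - 2 := by
        have h4 : u + u⁻¹ = 4 * l - 2 := by
          rw [hlval]; ring
        have := congrArg Complex.re h4
        simpa [Complex.add_re, Complex.sub_re, Complex.mul_re] using this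
      have huinvre : (u⁻¹).re = (u.re)⁻¹ := by
        rw [Complex.inv_re, Complex.normSq_apply, him]
        by_cases h0 : u.re = 0
        · simp [h0]
        · field_simp
          ring
      by_contra hneg
      push_neg at hneg
      have hure0 : u.re ≠ 0 := by
        intro h0
        exact hune (Complex.ext h0 him)
      have hlt : u.re < 0 := lt_of_le_of_ne hneg hure0
      have hinvlt : (u.re)⁻¹ < 0 := inv_lt_zero.mpr hlt
      rw [huinvre] at hsum
      linarith
    · right; exact him
  have hdu : HasDerivAt (fun y : ℂ => -1 + 2 * y + 2 * sqrtBranch1 y) (2 + 2 * S') l := by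
    have h1 : HasDerivAt (fun y : ℂ => -1 + 2 * y) (2 : ℂ) l := by
      simpa using ((hasDerivAt_id l).const_mul (2:ℂ)).const_add (-1)
    simpa [Pi.add_def] using h1.add (hdS.const_mul 2)
  have hdlog : HasDerivAt (fun y : ℂ => Complex.log (-1 + 2 * y + 2 * sqrtBranch1 y))
      ((2 + 2 * S') / u) l := hdu.clog huslit
  have hfinal : HasDerivAt psiFun (-2 * S' + (2 + 2 * S') / u) l :=
    (hdS.const_mul (-2:ℂ)).add hdlog
  convert hfinal using 1
  have hueq : (-1 + 2 * l + 2 * (l * w)) ≠ 0 := by rwa [hu, hSval] at hune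
  have hwsq' : l * (w * w) = l - 1 := by
    rw [hwsq, hz]; field_simp
  have hl1' : l - 1 ≠ 0 := sub_ne_zero.mpr hl1
  have hS'2 : S' = w + w / (2 * (l - 1)) := by
    rw [hS', hz]
    field_simp
  rw [hS'2, hu, hSval]
  field_simp
  have hueq2 : -1 + 2 * l + 2 * w * l ≠ 0 := by convert hueq using 2; ring
  field_simp
  linear_combination (2 : ℂ) * hwsq'

noncomputable def F (s : ℝ) : ℝ :=
  Real.sqrt (s ^ 2 - s) - (1 / 2) * Real.log (2 * s - 1 + 2 * Real.sqrt (s ^ 2 - s))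

lemma F_deriv (x : ℝ) (hx : 1 < x) :
    HasDerivAt F (Real.sqrt ((x - 1) / x)) x := by
  have hx0 : 0 < x := by linarith
  have hq : 0 < x ^ 2 - x := by nlinarith
  set r : ℝ := Real.sqrt (x ^ 2 - x) with hr
  have hrpos : 0 < r := Real.sqrt_pos.mpr hq
  have hrsq : r ^ 2 = x ^ 2 - x := Real.sq_sqrt hq.le
  have hdq : HasDerivAt (fun s : ℝ => s ^ 2 - s) (2 * x - 1) x := by
    simpa [Pi.sub_def] using (hasDerivAt_pow 2 x).sub (hasDerivAt_id x)
  have hdr : HasDerivAt (fun s : ℝ => Real.sqrt (s ^ 2 - s)) ((2 * x - 1) / (2 * r)) x := by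
    simpa [hr] using hdq.sqrt hq.ne'
  have hpos : 0 < 2 * x - 1 + 2 * r := by linarith
  have hdh : HasDerivAt (fun s : ℝ => 2 * s - 1 + 2 * Real.sqrt (s ^ 2 - s))
      (2 + 2 * ((2 * x - 1) / (2 * r))) x := by
    have h1 : HasDerivAt (fun s : ℝ => 2 * s - 1) (2 : ℝ) x := by
      simpa using ((hasDerivAt_id x).const_mul (2:ℝ)).sub_const 1
    exact h1.add (hdr.const_mul 2)
  have hdlog : HasDerivAt (fun s : ℝ => Real.log (2 * s - 1 + 2 * Real.sqrt (s ^ 2 - s)))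
      ((2 + 2 * ((2 * x - 1) / (2 * r))) / (2 * x - 1 + 2 * r)) x := by
    simpa [hr] using hdh.log hpos.ne'
  have hd : HasDerivAt F
      ((2 * x - 1) / (2 * r) - (1/2) * ((2 + 2 * ((2 * x - 1) / (2 * r))) / (2 * x - 1 + 2 * r))) x :=
    hdr.sub (hdlog.const_mul (1/2))
  convert hd using 1
  have hsv : Real.sqrt ((x - 1) / x) = (x - 1) / r := by
    rw [show (x - 1) / x = ((x - 1) / r) ^ 2 by
      rw [div_pow, hrsq]
      field_simp]
    exact Real.sqrt_sq (div_nonneg (by linarith) hrpos.le)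
  rw [hsv]
  field_simp
  rw [show r * 2 + (x * 2 - 1) = x * 2 - 1 + r * 2 by ring, div_self (by linarith)]
  ring

lemma F_integral (l : ℝ) (hl : 1 < l) :
    ∫ s in (1:ℝ)..l, Real.sqrt ((s - 1) / s) = F l := by
  have hle : (1:ℝ) ≤ l := hl.le
  have hF1 : F 1 = 0 := by
    norm_num [F]
  have hcont : ContinuousOn F (Set.Icc 1 l) := by
    have hq : Continuous fun s : ℝ => s ^ 2 - s := by continuity
    have hr : Continuous fun s : ℝ => Real.sqrt (s ^ 2 - s) :=
      Real.continuous_sqrt.comp hq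
    have hh : Continuous fun s : ℝ => 2 * s - 1 + 2 * Real.sqrt (s ^ 2 - s) := by
      continuity
    apply ContinuousOn.sub hr.continuousOn
    apply ContinuousOn.mul continuousOn_const
    apply ContinuousOn.log hh.continuousOn
    intro x hx
    have h1 : (1:ℝ) ≤ x := hx.1
    have : 0 ≤ Real.sqrt (x ^ 2 - x) := Real.sqrt_nonneg _
    nlinarith
  have hderiv : ∀ x ∈ Set.Ioo (1:ℝ) l,
      HasDerivWithinAt F (Real.sqrt ((x - 1) / x)) (Set.Ioi x) x :=
    fun x hx => (F_deriv x hx.1).hasDerivWithinAt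
  have hint : IntervalIntegrable (fun s => Real.sqrt ((s - 1) / s))
      MeasureTheory.volume 1 l := by
    apply ContinuousOn.intervalIntegrable
    rw [Set.uIcc_of_le hle]
    apply ContinuousOn.sqrt
    apply ContinuousOn.div (by fun_prop) (by fun_prop)
    intro x hx
    have : (1:ℝ) ≤ x := hx.1
    linarith
  have := intervalIntegral.integral_eq_sub_of_hasDeriv_right_of_le hle hcont hderiv hint
  rw [this, hF1, sub_zero]

lemma part1 (l : ℝ) (hl : 1 < l) :
    psiFun (l : ℂ) = -2 * ((∫ s in (1 : ℝ)..l, Real.sqrt ((s - 1) / s) : ℝ) : ℂ) := by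
  rw [F_integral l hl]
  have hl0 : (0:ℝ) < l := by linarith
  have hz : (0:ℝ) ≤ 1 - 1 / l := by
    rw [sub_nonneg, div_le_one hl0]; linarith
  have hsb : sqrtBranch1 (l : ℂ) = ((Real.sqrt (l ^ 2 - l) : ℝ) : ℂ) := by
    rw [sqrtBranch1]
    have h1 : (1 : ℂ) - 1 / (l : ℂ) = ((1 - 1 / l : ℝ) : ℂ) := by push_cast; ring
    rw [h1, show ((1:ℂ)/2) = ((1/2 : ℝ) : ℂ) by push_cast; ring,
      ← Complex.ofReal_cpow hz, ← Real.sqrt_eq_rpow]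
    rw [show Real.sqrt (l ^ 2 - l) = l * Real.sqrt (1 - 1/l) by
      rw [show l ^ 2 - l = l ^ 2 * (1 - 1/l) by field_simp,
        Real.sqrt_mul (sq_nonneg l), Real.sqrt_sq hl0.le]]
    push_cast
    ring
  have hrpos : 0 < 2 * l - 1 + 2 * Real.sqrt (l ^ 2 - l) := by
    have := Real.sqrt_nonneg (l ^ 2 - l)
    linarith
  rw [psiFun, hsb]
  have harg : -1 + 2 * (l:ℂ) + 2 * ((Real.sqrt (l ^ 2 - l) : ℝ) : ℂ)
      = ((2 * l - 1 + 2 * Real.sqrt (l ^ 2 - l) : ℝ) : ℂ) := by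
    push_cast; ring
  rw [harg, ← Complex.ofReal_log hrpos.le, F]
  push_cast
  ring


/-- `ψ(λ) = -2 ∫_1^λ √((s-1)/s) ds` equals the closed form
`-2√(λ(λ-1)) + ln(-1 + 2λ + 2√(λ(λ-1)))`: the closed form agrees with the real integral
on `(1, ∞)` and is an antiderivative of `-2√((λ-1)/λ)` throughout `ℂ \ (-∞, 1]`. -/
theorem psi_closed_form :
    (∀ l : ℝ, 1 < l →
      psiFun (l : ℂ) = -2 * ((∫ s in (1 : ℝ)..l, Real.sqrt ((s - 1) / s) : ℝ) : ℂ)) ∧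
    (∀ l : ℂ, (l.im ≠ 0 ∨ 1 < l.re) →
      HasDerivAt psiFun (-2 * (1 - 1 / l) ^ ((1 : ℂ) / 2)) l) := by
  exact ⟨part1, part2⟩
end

section
/- The boundary values of ψ(λ) = −2√(λ(λ−1)) + ln(−1 + 2λ + 2√(λ(λ−1))) on the real axis satisfy: ψ_+(λ) − ψ_−(λ) = 2πi for λ ∈ (−∞, 0), and ψ_+(λ) + ψ_−(λ) = 0 for λ ∈ (0,1), where ψ_± denote the limits from the upper/lower half-plane. -/
open Complex Filter

lemma sqrtBranch1_sq {z : ℂ} (hz : z ≠ 0) (hw : (1 : ℂ) - 1 / z ≠ 0) :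
    sqrtBranch1 z ^ 2 = z ^ 2 - z := by
  unfold sqrtBranch1
  have h : ((1 - 1 / z) ^ ((1 : ℂ) / 2)) ^ 2 = 1 - 1 / z := by
    rw [sq, ← Complex.cpow_add _ _ hw]
    norm_num
  rw [mul_pow, h]
  field_simp

lemma im_one_sub_inv_plus (l ε : ℝ) : (1 - 1 / ((l : ℂ) + ε * I)).im
    = ε / Complex.normSq ((l : ℂ) + ε * I) := by
  rw [one_div, Complex.sub_im, Complex.inv_im]
  simp [neg_div]

lemma im_one_sub_inv_minus (l ε : ℝ) : (1 - 1 / ((l : ℂ) - ε * I)).im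
    = -ε / Complex.normSq ((l : ℂ) - ε * I) := by
  rw [one_div, Complex.sub_im, Complex.inv_im]
  simp [neg_div]

lemma zp_ne_zero {l : ℝ} (hl : l ≠ 0) (ε : ℝ) : ((l : ℂ) + ε * I) ≠ 0 := by
  intro h
  have : ((l : ℂ) + ε * I).re = 0 := by rw [h]; simp
  simp at this
  exact hl this

lemma zm_ne_zero {l : ℝ} (hl : l ≠ 0) (ε : ℝ) : ((l : ℂ) - ε * I) ≠ 0 := by
  intro h
  have : ((l : ℂ) - ε * I).re = 0 := by rw [h]; simp
  simp at this
  exact hl this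

lemma tendsto_zp (l : ℝ) :
    Tendsto (fun ε : ℝ => (l : ℂ) + ε * I) (nhdsWithin 0 (Set.Ioi 0)) (nhds (l : ℂ)) := by
  have : Continuous (fun ε : ℝ => (l : ℂ) + ε * I) := by continuity
  have h := (this.tendsto 0).mono_left (nhdsWithin_le_nhds (s := Set.Ioi 0))
  simpa using h

lemma tendsto_zm (l : ℝ) :
    Tendsto (fun ε : ℝ => (l : ℂ) - ε * I) (nhdsWithin 0 (Set.Ioi 0)) (nhds (l : ℂ)) := by
  have : Continuous (fun ε : ℝ => (l : ℂ) - ε * I) := by continuity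
  have h := (this.tendsto 0).mono_left (nhdsWithin_le_nhds (s := Set.Ioi 0))
  simpa using h

/-- Boundary values of `ψ` on the real axis: `ψ₊ - ψ₋ = 2πi` on `(-∞, 0)` and
`ψ₊ + ψ₋ = 0` on `(0, 1)`, where `ψ±(λ) = lim_{ε→0+} ψ(λ ± iε)`. -/
theorem psi_boundary_values (l : ℝ) :
    (l < 0 →
      Tendsto (fun ε : ℝ => psiFun ((l : ℂ) + ε * Complex.I) - psiFun ((l : ℂ) - ε * Complex.I))
        (nhdsWithin 0 (Set.Ioi 0)) (nhds (2 * Real.pi * Complex.I))) ∧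
    (0 < l → l < 1 →
      Tendsto (fun ε : ℝ => psiFun ((l : ℂ) + ε * Complex.I) + psiFun ((l : ℂ) - ε * Complex.I))
        (nhdsWithin 0 (Set.Ioi 0)) (nhds 0)) := by
  constructor
  · -- Case l < 0
    intro hl
    have hl0 : l ≠ 0 := ne_of_lt hl
    have hlC : (l : ℂ) ≠ 0 := Complex.ofReal_ne_zero.mpr hl0
    have hinv : 1 / l < 0 := div_neg_of_pos_of_neg one_pos hl
    have hcast : (1 - 1/(l:ℂ)) = ((1 - 1/l : ℝ) : ℂ) := by push_cast; ring
    have hw0re : (0:ℝ) < (1 - 1/(l:ℂ)).re := by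
      rw [hcast, Complex.ofReal_re]; linarith
    have hcont : ContinuousAt sqrtBranch1 (l:ℂ) := by
      have h1 : ContinuousAt (fun z : ℂ => 1 - 1/z) (l:ℂ) :=
        continuousAt_const.sub (continuousAt_const.div continuousAt_id hlC)
      have h2 : ContinuousAt (fun z : ℂ => z ^ ((1:ℂ)/2)) (1 - 1/(l:ℂ)) :=
        continuousAt_cpow_const (Or.inl hw0re)
      exact continuousAt_id.mul (ContinuousAt.comp (g := fun z : ℂ => z ^ ((1:ℂ)/2)) h2 h1)
    set s0r : ℝ := l * Real.sqrt (1 - 1/l) with hs0r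
    have hsqrt_pos : 0 < Real.sqrt (1 - 1/l) := Real.sqrt_pos.mpr (by linarith)
    have hs0r_neg : s0r < 0 := mul_neg_of_neg_of_pos hl hsqrt_pos
    have hs0val : sqrtBranch1 (l:ℂ) = ((s0r : ℝ) : ℂ) := by
      unfold sqrtBranch1
      have h3 : ((1:ℂ)/2) = (((1/2 : ℝ)) : ℂ) := by norm_num
      rw [hcast, h3, ← Complex.ofReal_cpow (by linarith : (0:ℝ) ≤ 1 - 1/l),
        ← Real.sqrt_eq_rpow]
      rw [hs0r]
      push_cast [one_div]
      ring
    set A0 : ℂ := -1 + 2*(l:ℂ) + 2*sqrtBranch1 (l:ℂ) with hA0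
    have hA0val : A0 = ((-1 + 2*l + 2*s0r : ℝ) : ℂ) := by
      rw [hA0, hs0val]; push_cast; ring
    have hA0re : A0.re < 0 := by rw [hA0val, Complex.ofReal_re]; linarith
    have hA0im : A0.im = 0 := by rw [hA0val, Complex.ofReal_im]
    have hs_up : Tendsto (fun ε : ℝ => sqrtBranch1 ((l:ℂ) + ε*I))
        (nhdsWithin 0 (Set.Ioi 0)) (nhds (sqrtBranch1 (l:ℂ))) :=
      hcont.tendsto.comp (tendsto_zp l)
    have hs_dn : Tendsto (fun ε : ℝ => sqrtBranch1 ((l:ℂ) - ε*I))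
        (nhdsWithin 0 (Set.Ioi 0)) (nhds (sqrtBranch1 (l:ℂ))) :=
      hcont.tendsto.comp (tendsto_zm l)
    have hA_up : Tendsto (fun ε : ℝ => -1 + 2*((l:ℂ) + ε*I) + 2*sqrtBranch1 ((l:ℂ) + ε*I))
        (nhdsWithin 0 (Set.Ioi 0)) (nhds A0) :=
      (tendsto_const_nhds.add ((tendsto_zp l).const_mul 2)).add (hs_up.const_mul 2)
    have hA_dn : Tendsto (fun ε : ℝ => -1 + 2*((l:ℂ) - ε*I) + 2*sqrtBranch1 ((l:ℂ) - ε*I))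
        (nhdsWithin 0 (Set.Ioi 0)) (nhds A0) :=
      (tendsto_const_nhds.add ((tendsto_zm l).const_mul 2)).add (hs_dn.const_mul 2)
    have hs0re_neg : (sqrtBranch1 (l:ℂ)).re < 0 := by rw [hs0val, Complex.ofReal_re]; exact hs0r_neg
    have h_re_up : Tendsto (fun ε : ℝ => (sqrtBranch1 ((l:ℂ) + ε*I)).re)
        (nhdsWithin 0 (Set.Ioi 0)) (nhds ((sqrtBranch1 (l:ℂ)).re)) :=
      (Complex.continuous_re.tendsto _).comp hs_up
    have h_re_dn : Tendsto (fun ε : ℝ => (sqrtBranch1 ((l:ℂ) - ε*I)).re)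
        (nhdsWithin 0 (Set.Ioi 0)) (nhds ((sqrtBranch1 (l:ℂ)).re)) :=
      (Complex.continuous_re.tendsto _).comp hs_dn
    have h_ev_up : ∀ᶠ ε : ℝ in nhdsWithin 0 (Set.Ioi 0),
        (-1 + 2*((l:ℂ) + ε*I) + 2*sqrtBranch1 ((l:ℂ) + ε*I)) ∈ {z : ℂ | 0 ≤ z.im} := by
      filter_upwards [h_re_up.eventually_lt_const hs0re_neg, self_mem_nhdsWithin] with ε h1 h2
      simp only [Set.mem_Ioi] at h2
      set z : ℂ := (l:ℂ) + ε*I with hz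
      have hz0 : z ≠ 0 := zp_ne_zero hl0 ε
      have hwim : (1 - 1/z).im = ε / Complex.normSq z := im_one_sub_inv_plus l ε
      have hnsq : 0 < Complex.normSq z := Complex.normSq_pos.mpr hz0
      have hw0 : (1 : ℂ) - 1/z ≠ 0 := by
        intro h; rw [h] at hwim
        have : 0 < ε / Complex.normSq z := div_pos h2 hnsq
        simp [← hwim] at this
      have hsq := sqrtBranch1_sq hz0 hw0
      have him_sq : (sqrtBranch1 z ^ 2).im = ε * (2*l - 1) := by
        rw [hsq, sq]
        simp [hz, Complex.sub_im, Complex.mul_im, Complex.add_re, Complex.add_im,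
          Complex.mul_re, Complex.ofReal_re, Complex.ofReal_im, Complex.I_re, Complex.I_im]
        ring
      have hkey : 2 * (sqrtBranch1 z).re * (sqrtBranch1 z).im = ε * (2*l - 1) := by
        rw [← him_sq, sq, Complex.mul_im]; ring
      have him : 0 < (sqrtBranch1 z).im := by nlinarith
      have hAim : (-1 + 2*z + 2*sqrtBranch1 z).im = 2*ε + 2*(sqrtBranch1 z).im := by
        simp [hz, Complex.add_im, Complex.mul_im, Complex.sub_im, Complex.ofReal_re,
          Complex.ofReal_im, Complex.I_re, Complex.I_im]
      show (0:ℝ) ≤ (-1 + 2*z + 2*sqrtBranch1 z).im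
      rw [hAim]; linarith
    have h_ev_dn : ∀ᶠ ε : ℝ in nhdsWithin 0 (Set.Ioi 0),
        (-1 + 2*((l:ℂ) - ε*I) + 2*sqrtBranch1 ((l:ℂ) - ε*I)) ∈ {z : ℂ | z.im < 0} := by
      filter_upwards [h_re_dn.eventually_lt_const hs0re_neg, self_mem_nhdsWithin] with ε h1 h2
      simp only [Set.mem_Ioi] at h2
      set z : ℂ := (l:ℂ) - ε*I with hz
      have hz0 : z ≠ 0 := zm_ne_zero hl0 ε
      have hwim : (1 - 1/z).im = -ε / Complex.normSq z := im_one_sub_inv_minus l ε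
      have hnsq : 0 < Complex.normSq z := Complex.normSq_pos.mpr hz0
      have hw0 : (1 : ℂ) - 1/z ≠ 0 := by
        intro h; rw [h] at hwim
        have : -ε / Complex.normSq z < 0 := div_neg_of_neg_of_pos (by linarith) hnsq
        simp [← hwim] at this
      have hsq := sqrtBranch1_sq hz0 hw0
      have him_sq : (sqrtBranch1 z ^ 2).im = ε * (1 - 2*l) := by
        rw [hsq, sq]
        simp [hz, Complex.sub_im, Complex.mul_im, Complex.sub_re, Complex.add_im,
          Complex.mul_re, Complex.ofReal_re, Complex.ofReal_im, Complex.I_re, Complex.I_im]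
        ring
      have hkey : 2 * (sqrtBranch1 z).re * (sqrtBranch1 z).im = ε * (1 - 2*l) := by
        rw [← him_sq, sq, Complex.mul_im]; ring
      have him : (sqrtBranch1 z).im < 0 := by nlinarith
      have hAim : (-1 + 2*z + 2*sqrtBranch1 z).im = -(2*ε) + 2*(sqrtBranch1 z).im := by
        simp [hz, Complex.add_im, Complex.mul_im, Complex.sub_im, Complex.ofReal_re,
          Complex.ofReal_im, Complex.I_re, Complex.I_im]
      show (-1 + 2*z + 2*sqrtBranch1 z).im < 0
      rw [hAim]; linarith
    have h_log_up : Tendsto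
        (fun ε : ℝ => Complex.log (-1 + 2*((l:ℂ) + ε*I) + 2*sqrtBranch1 ((l:ℂ) + ε*I)))
        (nhdsWithin 0 (Set.Ioi 0)) (nhds (Real.log (‖A0‖) + Real.pi * I)) :=
      (Complex.tendsto_log_nhdsWithin_im_nonneg_of_re_neg_of_im_zero hA0re hA0im).comp
        (tendsto_nhdsWithin_iff.mpr ⟨hA_up, h_ev_up⟩)
    have h_log_dn : Tendsto
        (fun ε : ℝ => Complex.log (-1 + 2*((l:ℂ) - ε*I) + 2*sqrtBranch1 ((l:ℂ) - ε*I)))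
        (nhdsWithin 0 (Set.Ioi 0)) (nhds (Real.log (‖A0‖) - Real.pi * I)) :=
      (Complex.tendsto_log_nhdsWithin_im_neg_of_re_neg_of_im_zero hA0re hA0im).comp
        (tendsto_nhdsWithin_iff.mpr ⟨hA_dn, h_ev_dn⟩)
    have hpsi_up : Tendsto (fun ε : ℝ => psiFun ((l:ℂ) + ε*I)) (nhdsWithin 0 (Set.Ioi 0))
        (nhds (-2*sqrtBranch1 (l:ℂ) + (Real.log (‖A0‖) + Real.pi * I))) := by
      have := (hs_up.const_mul (-2)).add h_log_up
      simpa [psiFun] using this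
    have hpsi_dn : Tendsto (fun ε : ℝ => psiFun ((l:ℂ) - ε*I)) (nhdsWithin 0 (Set.Ioi 0))
        (nhds (-2*sqrtBranch1 (l:ℂ) + (Real.log (‖A0‖) - Real.pi * I))) := by
      have := (hs_dn.const_mul (-2)).add h_log_dn
      simpa [psiFun] using this
    have h := hpsi_up.sub hpsi_dn
    have heq : (-2*sqrtBranch1 (l:ℂ) + (Real.log (‖A0‖) + Real.pi * I))
        - (-2*sqrtBranch1 (l:ℂ) + (Real.log (‖A0‖) - Real.pi * I))
        = 2 * Real.pi * Complex.I := by ring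
    rw [heq] at h
    exact h
  · -- Case 0 < l < 1
    intro hl0 hl1
    have hlne : l ≠ 0 := ne_of_gt hl0
    have hlC : (l : ℂ) ≠ 0 := Complex.ofReal_ne_zero.mpr hlne
    have hgt : 1 < 1 / l := one_lt_one_div hl0 hl1
    have hc : (0:ℝ) < 1/l - 1 := by linarith
    set t : ℂ := ((1 - 1/l : ℝ) : ℂ) with ht
    have htre : t.re < 0 := by rw [ht, Complex.ofReal_re]; linarith
    have htim : t.im = 0 := by rw [ht, Complex.ofReal_im]
    have hcastw : 1 - 1/(l:ℂ) = t := by rw [ht]; push_cast; ring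
    have habs_t : ‖t‖ = 1/l - 1 := by
      rw [ht, Complex.norm_real, Real.norm_eq_abs, abs_of_neg (by linarith : (1:ℝ) - 1/l < 0)]; ring
    set b : ℝ := l * Real.sqrt (1/l - 1) with hb
    have hbpos : 0 < b := mul_pos hl0 (Real.sqrt_pos.mpr hc)
    have hb2 : b^2 = l - l^2 := by
      rw [hb, mul_pow, Real.sq_sqrt hc.le]; field_simp
    -- w = 1 - 1/z tendsto
    have hwc : ContinuousAt (fun z : ℂ => 1 - 1/z) (l:ℂ) :=
      continuousAt_const.sub (continuousAt_const.div continuousAt_id hlC)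
    have hw_up : Tendsto (fun ε : ℝ => 1 - 1/((l:ℂ) + ε*I)) (nhdsWithin 0 (Set.Ioi 0))
        (nhds t) := by
      have := hwc.tendsto.comp (tendsto_zp l)
      rwa [hcastw] at this
    have hw_dn : Tendsto (fun ε : ℝ => 1 - 1/((l:ℂ) - ε*I)) (nhdsWithin 0 (Set.Ioi 0))
        (nhds t) := by
      have := hwc.tendsto.comp (tendsto_zm l)
      rwa [hcastw] at this
    have hwim_up : ∀ᶠ ε : ℝ in nhdsWithin 0 (Set.Ioi 0),
        (0:ℝ) < (1 - 1/((l:ℂ) + ε*I)).im := by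
      filter_upwards [self_mem_nhdsWithin] with ε h2
      simp only [Set.mem_Ioi] at h2
      rw [im_one_sub_inv_plus]
      exact div_pos h2 (Complex.normSq_pos.mpr (zp_ne_zero hlne ε))
    have hwim_dn : ∀ᶠ ε : ℝ in nhdsWithin 0 (Set.Ioi 0),
        (1 - 1/((l:ℂ) - ε*I)).im < 0 := by
      filter_upwards [self_mem_nhdsWithin] with ε h2
      simp only [Set.mem_Ioi] at h2
      rw [im_one_sub_inv_minus]
      exact div_neg_of_neg_of_pos (by linarith) (Complex.normSq_pos.mpr (zm_ne_zero hlne ε))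
    have hlogw_up : Tendsto (fun ε : ℝ => Complex.log (1 - 1/((l:ℂ) + ε*I)))
        (nhdsWithin 0 (Set.Ioi 0)) (nhds (Real.log (‖t‖) + Real.pi * I)) :=
      (Complex.tendsto_log_nhdsWithin_im_nonneg_of_re_neg_of_im_zero htre htim).comp
        (tendsto_nhdsWithin_iff.mpr ⟨hw_up, hwim_up.mono fun ε h => le_of_lt h⟩)
    have hlogw_dn : Tendsto (fun ε : ℝ => Complex.log (1 - 1/((l:ℂ) - ε*I)))
        (nhdsWithin 0 (Set.Ioi 0)) (nhds (Real.log (‖t‖) - Real.pi * I)) :=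
      (Complex.tendsto_log_nhdsWithin_im_neg_of_re_neg_of_im_zero htre htim).comp
        (tendsto_nhdsWithin_iff.mpr ⟨hw_dn, hwim_dn⟩)
    -- value of the exponentials
    have hrexp : Real.exp (Real.log (‖t‖) / 2) = Real.sqrt (1/l - 1) := by
      rw [habs_t, Real.sqrt_eq_rpow, Real.rpow_def_of_pos hc]
      ring_nf
    have hexpI : Complex.exp (Real.pi * I * (1/2)) = I := by
      rw [show (Real.pi:ℂ) * I * (1/2) = ((Real.pi/2 : ℝ):ℂ) * I by push_cast; ring,
        Complex.exp_mul_I, ← Complex.ofReal_cos, ← Complex.ofReal_sin,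
        Real.cos_pi_div_two, Real.sin_pi_div_two]
      simp
    have hexpI' : Complex.exp (-(Real.pi * I) * (1/2)) = -I := by
      rw [show -((Real.pi:ℂ) * I) * (1/2) = ((-(Real.pi/2) : ℝ):ℂ) * I by push_cast; ring,
        Complex.exp_mul_I, ← Complex.ofReal_cos, ← Complex.ofReal_sin]
      simp [Real.cos_pi_div_two, Real.sin_pi_div_two]
    have he_up : Complex.exp ((Real.log (‖t‖) + Real.pi * I) * (1/2))
        = (Real.sqrt (1/l - 1) : ℂ) * I := by
      rw [add_mul, Complex.exp_add, hexpI,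
        show ((Real.log (‖t‖) : ℂ)) * (1/2) = ((Real.log (‖t‖) / 2 : ℝ):ℂ)
          by push_cast; ring, ← Complex.ofReal_exp, hrexp]
    have he_dn : Complex.exp ((Real.log (‖t‖) - Real.pi * I) * (1/2))
        = -((Real.sqrt (1/l - 1) : ℂ) * I) := by
      rw [sub_mul, sub_eq_add_neg, ← neg_mul, Complex.exp_add, hexpI',
        show ((Real.log (‖t‖) : ℂ)) * (1/2) = ((Real.log (‖t‖) / 2 : ℝ):ℂ)
          by push_cast; ring, ← Complex.ofReal_exp, hrexp]
      ring
    -- cpow as exp of log, eventually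
    have hq_up : Tendsto (fun ε : ℝ => (1 - 1/((l:ℂ) + ε*I)) ^ ((1:ℂ)/2))
        (nhdsWithin 0 (Set.Ioi 0)) (nhds ((Real.sqrt (1/l - 1) : ℂ) * I)) := by
      have h1 : Tendsto (fun ε : ℝ => Complex.exp (Complex.log (1 - 1/((l:ℂ) + ε*I)) * (1/2)))
          (nhdsWithin 0 (Set.Ioi 0))
          (nhds (Complex.exp ((Real.log (‖t‖) + Real.pi * I) * (1/2)))) :=
        (Complex.continuous_exp.tendsto _).comp (hlogw_up.mul_const _)
      rw [he_up] at h1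
      refine h1.congr' ?_
      filter_upwards [hwim_up] with ε hε
      rw [Complex.cpow_def_of_ne_zero (fun h => by rw [h] at hε; simp at hε)]
    have hq_dn : Tendsto (fun ε : ℝ => (1 - 1/((l:ℂ) - ε*I)) ^ ((1:ℂ)/2))
        (nhdsWithin 0 (Set.Ioi 0)) (nhds (-((Real.sqrt (1/l - 1) : ℂ) * I))) := by
      have h1 : Tendsto (fun ε : ℝ => Complex.exp (Complex.log (1 - 1/((l:ℂ) - ε*I)) * (1/2)))
          (nhdsWithin 0 (Set.Ioi 0))
          (nhds (Complex.exp ((Real.log (‖t‖) - Real.pi * I) * (1/2)))) :=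
        (Complex.continuous_exp.tendsto _).comp (hlogw_dn.mul_const _)
      rw [he_dn] at h1
      refine h1.congr' ?_
      filter_upwards [hwim_dn] with ε hε
      rw [Complex.cpow_def_of_ne_zero (fun h => by rw [h] at hε; simp at hε)]
    -- sqrtBranch1 limits
    have hs_up : Tendsto (fun ε : ℝ => sqrtBranch1 ((l:ℂ) + ε*I))
        (nhdsWithin 0 (Set.Ioi 0)) (nhds ((b:ℝ) * I)) := by
      have := (tendsto_zp l).mul hq_up
      rw [show (l:ℂ) * ((Real.sqrt (1/l - 1) : ℂ) * I) = (b:ℝ) * I by rw [hb]; push_cast; ring]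
        at this
      exact this
    have hs_dn : Tendsto (fun ε : ℝ => sqrtBranch1 ((l:ℂ) - ε*I))
        (nhdsWithin 0 (Set.Ioi 0)) (nhds (-((b:ℝ) * I))) := by
      have := (tendsto_zm l).mul hq_dn
      rw [show (l:ℂ) * (-((Real.sqrt (1/l - 1) : ℂ) * I)) = -((b:ℝ) * I) by
        rw [hb]; push_cast; ring] at this
      exact this
    -- limits of the log arguments
    set a : ℂ := ((2*l - 1 : ℝ) : ℂ) + ((2*b : ℝ) : ℂ) * I with ha
    set a' : ℂ := ((2*l - 1 : ℝ) : ℂ) - ((2*b : ℝ) : ℂ) * I with ha'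
    have hA_up : Tendsto (fun ε : ℝ => -1 + 2*((l:ℂ) + ε*I) + 2*sqrtBranch1 ((l:ℂ) + ε*I))
        (nhdsWithin 0 (Set.Ioi 0)) (nhds a) := by
      have h0 : Tendsto (fun ε : ℝ => -1 + 2*((l:ℂ) + ε*I) + 2*sqrtBranch1 ((l:ℂ) + ε*I))
          (nhdsWithin 0 (Set.Ioi 0)) (nhds (-1 + 2*(l:ℂ) + 2*((b:ℝ)*I))) :=
        (tendsto_const_nhds.add ((tendsto_zp l).const_mul 2)).add (hs_up.const_mul 2)
      rw [show (-1 + 2*(l:ℂ) + 2*((b:ℝ)*I)) = a by rw [ha]; push_cast; ring] at h0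
      exact h0
    have hA_dn : Tendsto (fun ε : ℝ => -1 + 2*((l:ℂ) - ε*I) + 2*sqrtBranch1 ((l:ℂ) - ε*I))
        (nhdsWithin 0 (Set.Ioi 0)) (nhds a') := by
      have h0 : Tendsto (fun ε : ℝ => -1 + 2*((l:ℂ) - ε*I) + 2*sqrtBranch1 ((l:ℂ) - ε*I))
          (nhdsWithin 0 (Set.Ioi 0)) (nhds (-1 + 2*(l:ℂ) + 2*(-((b:ℝ)*I)))) :=
        (tendsto_const_nhds.add ((tendsto_zm l).const_mul 2)).add (hs_dn.const_mul 2)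
      rw [show (-1 + 2*(l:ℂ) + 2*(-((b:ℝ)*I))) = a' by rw [ha']; push_cast; ring] at h0
      exact h0
    have ha_im : a.im = 2*b := by simp [ha]
    have ha'_im : a'.im = -(2*b) := by simp [ha']
    have hlog_a : ContinuousAt Complex.log a :=
      continuousAt_clog (Or.inr (by rw [ha_im]; positivity))
    have hlog_a' : ContinuousAt Complex.log a' :=
      continuousAt_clog (Or.inr (by rw [ha'_im]; simp; positivity))
    have hpsi_up : Tendsto (fun ε : ℝ => psiFun ((l:ℂ) + ε*I)) (nhdsWithin 0 (Set.Ioi 0))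
        (nhds (-2*((b:ℝ)*I) + Complex.log a)) := by
      have := (hs_up.const_mul (-2)).add (hlog_a.tendsto.comp hA_up)
      simpa [psiFun] using this
    have hpsi_dn : Tendsto (fun ε : ℝ => psiFun ((l:ℂ) - ε*I)) (nhdsWithin 0 (Set.Ioi 0))
        (nhds (-2*(-((b:ℝ)*I)) + Complex.log a')) := by
      have := (hs_dn.const_mul (-2)).add (hlog_a'.tendsto.comp hA_dn)
      simpa [psiFun] using this
    have h := hpsi_up.add hpsi_dn
    -- the limit value is 0
    have habs_a : ‖a‖ = 1 := by
      rw [ha, Complex.norm_add_mul_I]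
      have h1 : (2*l - 1)^2 + (2*b)^2 = 1 := by linear_combination 4 * hb2
      rw [h1, Real.sqrt_one]
    have ha'_conj : a' = (starRingEnd ℂ) a := by
      rw [ha, ha', map_add, map_mul, Complex.conj_ofReal, Complex.conj_ofReal, Complex.conj_I]
      ring
    have harg : a.arg ≠ Real.pi := by
      rw [Ne, Complex.arg_eq_pi_iff]
      rintro ⟨-, him⟩
      rw [ha_im] at him
      nlinarith
    have hval : (-2*((b:ℝ)*I) + Complex.log a) + (-2*(-((b:ℝ)*I)) + Complex.log a') = 0 := by
      rw [ha'_conj, Complex.log_conj _ harg]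
      have h2 : Complex.log a + (starRingEnd ℂ) (Complex.log a)
          = ((2 * (Complex.log a).re : ℝ) : ℂ) := Complex.add_conj _
      have h3 : (Complex.log a).re = 0 := by
        rw [Complex.log_re, habs_a, Real.log_one]
      have h4 : Complex.log a + (starRingEnd ℂ) (Complex.log a) = 0 := by
        rw [h2, h3]; simp
      linear_combination h4
    rw [hval] at h
    exact h
end
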